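/- arXiv:1508.04710 — 5 statements merged into one kernel-verified Lean document; each statement's English description precedes it below -/
import Mathlib

section
/- Let a be a real number, let r ≥ 1, b ≥ 0 and 1 ≤ ℓ ≤ r be integers, set ρ = 1 + (a/2)(r−1) + b, and let λ = (λ₁ ≥ … ≥ λ_ℓ ≥ 0, 0, …, 0) be a partition of length ≤ ℓ (viewed as a partition of length ≤ r) and k a natural number with k ≤ λ_ℓ. Let λ − k_ℓ denote the partition obtained by subtracting k from each of the first ℓ parts of λ. Then (ρ)_λ = (ρ)_{λ−k_ℓ} · ∏_{j=1}^{ℓ} (λ_j + (a/2)(r−j) + b)*_k, where (m)*_k is the falling Pochhammer symbol. -/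
open Finset

/-- The ascending Pochhammer symbol `(x)_n = x(x+1)⋯(x+n−1)`, with `(x)_0 = 1`. -/
noncomputable def poch (x : ℝ) (n : ℕ) : ℝ := ∏ i ∈ Finset.range n, (x + i)

/-- The falling Pochhammer symbol `(x)*_n = x(x−1)⋯(x−n+1)`, with `(x)*_0 = 1`. -/
noncomputable def fall (x : ℝ) (n : ℕ) : ℝ := ∏ i ∈ Finset.range n, (x - i)

/-- The multi-variable Pochhammer symbol `(s)_λ = ∏_{i=1}^{r} (s − (a/2)(i−1))_{λ_i}`
(here the index `i` runs over `0, …, r−1`, so `(i−1)` becomes `i`). -/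
noncomputable def pochMulti (a s : ℝ) (r : ℕ) (l : ℕ → ℕ) : ℝ :=
  ∏ i ∈ Finset.range r, poch (s - a / 2 * i) (l i)

lemma fall_peel (y : ℝ) (k : ℕ) : fall y (k+1) = y * fall (y-1) k := by
  unfold fall
  rw [Finset.prod_range_succ']
  push_cast
  ring_nf

lemma poch_add_fall (x : ℝ) (n k : ℕ) :
    poch x (n + k) = poch x n * fall (x + n + k - 1) k := by
  induction k with
  | zero => simp [fall]
  | succ k ih =>
    have h1 : poch x (n + (k+1)) = poch x (n+k) * (x + (n+k)) := by
      unfold poch; rw [← Nat.add_assoc, Finset.prod_range_succ]; push_cast; ring_nf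
    have h2 : fall (x + ↑n + ↑(k+1) - 1) (k+1) = (x + ↑n + ↑k) * fall (x + ↑n + ↑k - 1) k := by
      have hy : (x + ↑n + ↑(k+1) - 1 : ℝ) = x + ↑n + ↑k := by push_cast; ring
      rw [hy, fall_peel]
    rw [h1, ih, h2]; ring

/-- For `ρ = 1 + (a/2)(r−1) + b`, a partition `λ` of length `≤ ℓ ≤ r` and `k ≤ λ_ℓ`:
`(ρ)_λ = (ρ)_{λ−k_ℓ} · ∏_{j=1}^{ℓ} (λ_j + (a/2)(r−j) + b)*_k`, where `λ − k_ℓ`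
subtracts `k` from each of the first `ℓ` parts of `λ`. -/
theorem pochMulti_fall (a : ℝ) (r b ℓ : ℕ) (hℓ1 : 1 ≤ ℓ) (hℓr : ℓ ≤ r)
    (l : ℕ → ℕ) (hl : Antitone l) (hlen : ∀ i, ℓ ≤ i → l i = 0)
    (k : ℕ) (hk : k ≤ l (ℓ - 1)) :
    pochMulti a (1 + a / 2 * ((r : ℝ) - 1) + b) r l =
    pochMulti a (1 + a / 2 * ((r : ℝ) - 1) + b) r (fun i => l i - k) *
      ∏ j ∈ Finset.range ℓ, fall ((l j : ℝ) + a / 2 * ((r : ℝ) - 1 - j) + b) k := by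
  set s : ℝ := 1 + a / 2 * ((r : ℝ) - 1) + b with hs
  set F : ℕ → ℝ := fun j => if j < ℓ then
      fall ((l j : ℝ) + a / 2 * ((r : ℝ) - 1 - j) + b) k else 1 with hF
  have hprod : (∏ j ∈ Finset.range ℓ, fall ((l j : ℝ) + a / 2 * ((r : ℝ) - 1 - j) + b) k)
      = ∏ j ∈ Finset.range r, F j := by
    rw [← Finset.prod_subset (Finset.range_subset_range.mpr hℓr)
      (by intro j _ hj; simp only [Finset.mem_range, not_lt] at hj
          simp [hF, if_neg (not_lt.mpr hj)])]
    apply Finset.prod_congr rfl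
    intro j hj
    rw [hF]
    simp [if_pos (Finset.mem_range.mp hj)]
  rw [hprod]
  unfold pochMulti
  rw [← Finset.prod_mul_distrib]
  apply Finset.prod_congr rfl
  intro i hi
  rw [Finset.mem_range] at hi
  by_cases hiℓ : i < ℓ
  · have hki : k ≤ l i := le_trans hk (hl (by omega : i ≤ ℓ - 1))
    have key := poch_add_fall (s - a / 2 * i) (l i - k) k
    have e1 : l i - k + k = l i := by omega
    have e2 : (s - a / 2 * ↑i) + ↑(l i - k) + ↑k - 1
        = (l i : ℝ) + a / 2 * ((r : ℝ) - 1 - i) + b := by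
      rw [Nat.cast_sub hki, hs]; ring
    rw [e1, e2] at key
    simp only [hF, if_pos hiℓ]
    exact key
  · have h0 : l i = 0 := hlen i (not_lt.mp hiℓ)
    simp [hF, if_neg hiℓ, h0]
end

section
/- Let a > 0 be real, let r ≥ 1 and b ≥ 0 be integers, set ρ = 1 + (a/2)(r−1) + b, and for a partition μ = (μ₁ ≥ … ≥ μ_r ≥ 0) of length ≤ r define h(μ) = ((ρ−b)_μ / (ρ)_μ) · ∏_{1≤i<j≤r} (1+(a/2)(j−i−1))_{μ_i−μ_j} / (1+(a/2)(j−i))_{μ_i−μ_j}. Let α, γ be partitions of length ≤ r−1 and k a natural number such that k + γ_j ≥ α_j for all 1 ≤ j ≤ r−1. Then any real sequence (c_m)_{m∈ℕ} satisfying c_m = h(m−k, γ)/h(m, α) for all m ≥ max(α₁, k+γ₁) belongs to the class 𝒮₊. -/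
open Finset

/-- The class `𝒮₊`: real sequences `c` for which there exist constants `c₀ > 0` and `c₁`
such that `m² · (c_m − c₀ − c₁/(m+1))` is a bounded sequence. -/
def SPlus (c : ℕ → ℝ) : Prop :=
  ∃ c₀ c₁ : ℝ, 0 < c₀ ∧ ∃ C : ℝ, ∀ m : ℕ,
    |(m : ℝ) ^ 2 * (c m - c₀ - c₁ / ((m : ℝ) + 1))| ≤ C

/-- The squared Hardy norm `h(μ) = ‖N_μ‖²_S`:
`h(μ) = ((ρ−b)_μ/(ρ)_μ) · ∏_{1≤i<j≤r} (1+(a/2)(j−i−1))_{μ_i−μ_j}/(1+(a/2)(j−i))_{μ_i−μ_j}`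
with `ρ = 1 + (a/2)(r−1) + b`. -/
noncomputable def hnorm (a : ℝ) (r b : ℕ) (μ : ℕ → ℕ) : ℝ :=
  (pochMulti a (1 + a / 2 * ((r : ℝ) - 1)) r μ /
      pochMulti a (1 + a / 2 * ((r : ℝ) - 1) + b) r μ) *
    ∏ p ∈ (Finset.range r ×ˢ Finset.range r).filter (fun p => p.1 < p.2),
      poch (1 + a / 2 * ((p.2 : ℝ) - (p.1 : ℝ) - 1)) (μ p.1 - μ p.2) /
        poch (1 + a / 2 * ((p.2 : ℝ) - (p.1 : ℝ))) (μ p.1 - μ p.2)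

/-- The partition `(m, α)` of length `≤ r` obtained from a partition `α` of length `≤ r−1`
by prepending `m` as largest part. -/
def insertPart (m : ℕ) (α : ℕ → ℕ) : ℕ → ℕ := fun i => if i = 0 then m else α (i - 1)

lemma poch_pos {x : ℝ} (hx : 0 < x) (n : ℕ) : 0 < poch x n :=
  Finset.prod_pos fun i _ => by positivity

lemma poch_add (x : ℝ) (p q : ℕ) :
    poch x (p + q) = poch x p * ∏ i ∈ Finset.range q, (x + p + i) := by
  unfold poch
  rw [Finset.prod_range_add]
  exact congrArg _ (Finset.prod_congr rfl fun i _ => by push_cast; ring)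

lemma poch_ratio (x y : ℝ) (hx : 0 < x) (hy : 0 < y) (p q : ℕ) (hpq : p ≤ q) :
    (poch x p / poch y p) / (poch x q / poch y q)
      = ∏ i ∈ Finset.range (q - p), ((y + p + i) / (x + p + i)) := by
  obtain ⟨t, rfl⟩ : ∃ t, q = p + t := ⟨q - p, (Nat.add_sub_cancel' hpq).symm⟩
  rw [poch_add, poch_add, Nat.add_sub_cancel_left, Finset.prod_div_distrib]
  have h1 : poch x p ≠ 0 := ne_of_gt (poch_pos hx p)
  have h2 : poch y p ≠ 0 := ne_of_gt (poch_pos hy p)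
  have h3 : (∏ i ∈ Finset.range t, (x + p + i)) ≠ 0 :=
    ne_of_gt (Finset.prod_pos fun i _ => by positivity)
  have h4 : (∏ i ∈ Finset.range t, (y + p + i)) ≠ 0 :=
    ne_of_gt (Finset.prod_pos fun i _ => by positivity)
  field_simp

lemma hnorm_insert (a : ℝ) (ha : 0 < a) (n b : ℕ) (α : ℕ → ℕ) :
    ∃ K : ℝ, 0 < K ∧ ∀ m : ℕ,
      hnorm a (n+1) b (insertPart m α)
        = K * (poch (1 + a/2*(n:ℝ)) m / poch (1 + a/2*(n:ℝ) + (b:ℝ)) m)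
            * ∏ j ∈ Finset.range n,
                (poch (1 + a/2*(j:ℝ)) (m - α j) / poch (1 + a/2*((j:ℝ)+1)) (m - α j)) := by
  classical
  set s : ℝ := 1 + a/2*(n:ℝ) with hs
  refine ⟨((∏ i ∈ range n, poch (s - a/2*((i:ℝ)+1)) (α i)) /
           (∏ i ∈ range n, poch (s + (b:ℝ) - a/2*((i:ℝ)+1)) (α i))) *
          ∏ i ∈ range n, ∏ j ∈ range (n+1),
            (if i+1 < j then
              poch (1 + a/2*((j:ℝ) - ((i:ℝ)+1) - 1)) (α i - α (j-1)) /
              poch (1 + a/2*((j:ℝ) - ((i:ℝ)+1))) (α i - α (j-1))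
            else 1), ?_, ?_⟩
  · -- positivity of K
    apply mul_pos
    · apply div_pos <;> apply Finset.prod_pos <;> intro i hi <;>
        apply poch_pos
      · have : (i:ℝ) + 1 ≤ (n:ℝ) := by exact_mod_cast Nat.succ_le_of_lt (mem_range.mp hi)
        rw [hs]; nlinarith
      · have : (i:ℝ) + 1 ≤ (n:ℝ) := by exact_mod_cast Nat.succ_le_of_lt (mem_range.mp hi)
        have hb : (0:ℝ) ≤ (b:ℝ) := Nat.cast_nonneg b
        rw [hs]; nlinarith
    · apply Finset.prod_pos; intro i _
      apply Finset.prod_pos; intro j _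
      by_cases hij : i+1 < j
      · rw [if_pos hij]
        have hij' : ((i:ℝ)+1)+1 ≤ (j:ℝ) := by exact_mod_cast hij
        apply div_pos <;> apply poch_pos <;> nlinarith
      · rw [if_neg hij]; exact one_pos
  · intro m
    have hcast : (((n+1:ℕ)):ℝ) - 1 = (n:ℝ) := by push_cast; ring
    have hpm : ∀ t : ℝ, pochMulti a t (n+1) (insertPart m α)
        = (∏ i ∈ range n, poch (t - a/2*((i:ℝ)+1)) (α i)) * poch t m := by
      intro t
      rw [pochMulti, Finset.prod_range_succ']
      congr 1
      · refine Finset.prod_congr rfl fun i _ => ?_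
        have h1 : insertPart m α (i+1) = α i := by simp [insertPart]
        have h2 : (((i+1:ℕ)):ℝ) = (i:ℝ)+1 := by push_cast; ring
        rw [h1, h2]
      · have h1 : insertPart m α 0 = m := by simp [insertPart]
        rw [h1]
        norm_num
    have hpairs : (∏ p ∈ ((range (n+1)) ×ˢ (range (n+1))).filter (fun p => p.1 < p.2),
        (poch (1 + a/2*((p.2:ℝ) - (p.1:ℝ) - 1)) (insertPart m α p.1 - insertPart m α p.2) /
         poch (1 + a/2*((p.2:ℝ) - (p.1:ℝ))) (insertPart m α p.1 - insertPart m α p.2)))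
        = (∏ i ∈ range n, ∏ j ∈ range (n+1),
            (if i+1 < j then
              poch (1 + a/2*((j:ℝ) - ((i:ℝ)+1) - 1)) (α i - α (j-1)) /
              poch (1 + a/2*((j:ℝ) - ((i:ℝ)+1))) (α i - α (j-1))
            else 1))
          * ∏ j ∈ range n,
              (poch (1 + a/2*(j:ℝ)) (m - α j) / poch (1 + a/2*((j:ℝ)+1)) (m - α j)) := by
      rw [Finset.prod_filter, Finset.prod_product, Finset.prod_range_succ']
      congr 1
      · refine Finset.prod_congr rfl fun i _ => ?_
        refine Finset.prod_congr rfl fun j _ => ?_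
        by_cases hij : i+1 < j
        · rw [if_pos hij, if_pos hij]
          have hj0 : ¬ (j = 0) := by omega
          have h1 : insertPart m α (i+1) = α i := by simp [insertPart]
          have h2 : insertPart m α j = α (j-1) := by simp [insertPart, hj0]
          have h3 : (((i+1:ℕ)):ℝ) = (i:ℝ)+1 := by push_cast; ring
          rw [h1, h2, h3]
        · rw [if_neg hij, if_neg hij]
      · rw [Finset.prod_range_succ']
        have h0 : (if (0:ℕ) < 0 then
            poch (1 + a/2*(((0:ℕ)):ℝ) - (((0:ℕ)):ℝ) - 1) (insertPart m α 0 - insertPart m α 0) /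
            poch (1 + a/2*((((0:ℕ)):ℝ) - (((0:ℕ)):ℝ))) (insertPart m α 0 - insertPart m α 0)
            else (1:ℝ)) = 1 := by norm_num
        rw [show (∏ j ∈ range n, if (0:ℕ) < j+1 then
              poch (1 + a/2*((((j+1:ℕ)):ℝ) - (((0:ℕ)):ℝ) - 1)) (insertPart m α 0 - insertPart m α (j+1)) /
              poch (1 + a/2*((((j+1:ℕ)):ℝ) - (((0:ℕ)):ℝ))) (insertPart m α 0 - insertPart m α (j+1))
            else (1:ℝ)) = ∏ j ∈ range n,
              (poch (1 + a/2*(j:ℝ)) (m - α j) / poch (1 + a/2*((j:ℝ)+1)) (m - α j)) from ?_]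
        · norm_num
        · refine Finset.prod_congr rfl fun j _ => ?_
          rw [if_pos (Nat.succ_pos j)]
          have h1 : insertPart m α 0 = m := by simp [insertPart]
          have h2 : insertPart m α (j+1) = α j := by simp [insertPart]
          have h3 : (((j+1:ℕ)):ℝ) - (((0:ℕ)):ℝ) - 1 = (j:ℝ) := by push_cast; ring
          have h4 : (((j+1:ℕ)):ℝ) - (((0:ℕ)):ℝ) = (j:ℝ)+1 := by push_cast; ring
          rw [h1, h2, h3, h4]
    rw [hnorm]
    rw [show (1 + a / 2 * (((n+1:ℕ):ℝ) - 1)) = s by rw [hs, hcast]]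
    rw [hpm s, hpm (s + (b:ℝ)), hpairs]
    ring

def SA (c₀ : ℝ) (f : ℕ → ℝ) : Prop :=
  ∃ c₁ C : ℝ, ∃ M : ℕ, ∀ m : ℕ, M ≤ m →
    |f m - c₀ - c₁ / ((m : ℝ) + 1)| ≤ C / ((m : ℝ) + 1) ^ 2

lemma SA.const (K : ℝ) : SA K (fun _ => K) :=
  ⟨0, 0, 0, fun m _ => by simp⟩

lemma SA.Cnonneg {c₀ c₁ C : ℝ} {M : ℕ} {f : ℕ → ℝ}
    (h : ∀ m : ℕ, M ≤ m → |f m - c₀ - c₁ / ((m : ℝ) + 1)| ≤ C / ((m : ℝ) + 1) ^ 2) :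
    0 ≤ C := by
  have h1 := h M le_rfl
  have h2 : (0:ℝ) < ((M:ℝ)+1)^2 := by positivity
  have h3 : (0:ℝ) ≤ C / ((M:ℝ)+1)^2 := le_trans (abs_nonneg _) h1
  have h4 := (le_div_iff₀ h2).mp h3
  linarith

lemma SA.mul {c₀ d₀ : ℝ} {f g : ℕ → ℝ} (hf : SA c₀ f) (hg : SA d₀ g) :
    SA (c₀ * d₀) (fun m => f m * g m) := by
  obtain ⟨c₁, C, M, hC⟩ := hf
  obtain ⟨d₁, D, N, hD⟩ := hg
  have hC0 : 0 ≤ C := SA.Cnonneg hC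
  have hD0 : 0 ≤ D := SA.Cnonneg hD
  refine ⟨c₀ * d₁ + c₁ * d₀, |c₁ * d₁| + C*(|d₀| + |d₁| + D) + (|c₀| + |c₁|)*D, max M N,
    fun m hm => ?_⟩
  have hfm := hC m (le_trans (le_max_left _ _) hm)
  have hgm := hD m (le_trans (le_max_right _ _) hm)
  set n : ℝ := (m:ℝ) + 1 with hn
  have hm0 : (0:ℝ) ≤ (m:ℝ) := Nat.cast_nonneg m
  have hn1 : (1:ℝ) ≤ n := by rw [hn]; linarith
  have hnpos : (0:ℝ) < n := lt_of_lt_of_le one_pos hn1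
  have hn2 : (0:ℝ) < n^2 := by positivity
  set E : ℝ := f m - c₀ - c₁ / n with hE
  set F : ℝ := g m - d₀ - d₁ / n with hF
  have key : f m * g m - c₀*d₀ - (c₀*d₁ + c₁*d₀)/n
      = E * g m + (c₀ + c₁/n) * F + c₁*d₁/n^2 := by
    rw [hE, hF]; field_simp; ring
  rw [key]
  have hg_bound : |g m| ≤ |d₀| + |d₁| + D := by
    have hgm' : g m = d₀ + d₁/n + F := by rw [hF]; ring
    rw [hgm']
    have h1 : |d₁/n| ≤ |d₁| := by
      rw [abs_div, abs_of_pos hnpos]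
      calc |d₁|/n ≤ |d₁|/1 :=
            div_le_div_of_nonneg_left (abs_nonneg _) one_pos hn1
        _ = |d₁| := div_one _
    have h2 : |F| ≤ D := le_trans hgm (by
      calc D/n^2 ≤ D/1 := div_le_div_of_nonneg_left hD0 one_pos (by nlinarith)
        _ = D := div_one _)
    calc |d₀ + d₁/n + F| ≤ |d₀| + |d₁/n| + |F| := abs_add_three _ _ _
      _ ≤ |d₀| + |d₁| + D := by linarith
  have hc_bound : |c₀ + c₁/n| ≤ |c₀| + |c₁| := by
    have h1 : |c₁/n| ≤ |c₁| := by
      rw [abs_div, abs_of_pos hnpos]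
      calc |c₁|/n ≤ |c₁|/1 :=
            div_le_div_of_nonneg_left (abs_nonneg _) one_pos hn1
        _ = |c₁| := div_one _
    calc |c₀ + c₁/n| ≤ |c₀| + |c₁/n| := abs_add_le _ _
      _ ≤ |c₀| + |c₁| := by linarith
  have b1 : |E| * |g m| ≤ (C/n^2) * (|d₀| + |d₁| + D) :=
    mul_le_mul hfm hg_bound (abs_nonneg _) (by positivity)
  have b2 : |c₀ + c₁/n| * |F| ≤ (|c₀| + |c₁|) * (D/n^2) :=
    mul_le_mul hc_bound hgm (abs_nonneg _) (by positivity)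
  calc |E * g m + (c₀ + c₁/n) * F + c₁*d₁/n^2|
      ≤ |E * g m| + |(c₀ + c₁/n) * F| + |c₁*d₁/n^2| := abs_add_three _ _ _
    _ = |E| * |g m| + |c₀ + c₁/n| * |F| + |c₁*d₁|/n^2 := by
        rw [abs_mul, abs_mul, abs_div, abs_of_pos hn2]
    _ ≤ (C/n^2) * (|d₀| + |d₁| + D) + (|c₀| + |c₁|) * (D/n^2) + |c₁*d₁|/n^2 := by
        have : |c₁*d₁| = |c₁ * d₁| := rfl
        linarith
    _ = (|c₁ * d₁| + C*(|d₀| + |d₁| + D) + (|c₀| + |c₁|)*D)/n^2 := by ring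

lemma SA.finprod {ι : Type} (s : Finset ι) (p : ι → ℝ) (f : ι → ℕ → ℝ)
    (h : ∀ i ∈ s, SA (p i) (f i)) :
    SA (∏ i ∈ s, p i) (fun m => ∏ i ∈ s, f i m) := by
  classical
  revert h
  refine Finset.induction_on s ?_ ?_
  · intro _; simpa using SA.const 1
  · intro i s hi ih h
    simp only [Finset.prod_insert hi]
    exact (h i (Finset.mem_insert_self _ _)).mul
      (ih fun j hj => h j (Finset.mem_insert_of_mem hj))

lemma SA.lin (u v : ℝ) : SA 1 (fun m => ((m:ℝ) + u) / ((m:ℝ) + v)) := by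
  refine ⟨u - v, 2 * |u - v| * |1 - v|, ⌈2 * |1 - v| + |v|⌉₊, fun m hm => ?_⟩
  have hmr : 2 * |1 - v| + |v| ≤ (m:ℝ) :=
    le_trans (Nat.le_ceil _) (by exact_mod_cast Nat.cast_le.mpr hm)
  set n : ℝ := (m:ℝ) + 1 with hn
  have hnpos : (0:ℝ) < n := by positivity
  have hmv : n/2 ≤ (m:ℝ) + v := by
    have h1 : 1 - v ≤ |1 - v| := le_abs_self _
    have h2 : -v ≤ |v| := neg_le_abs _
    rw [hn]; nlinarith [abs_nonneg (1-v), abs_nonneg v]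
  have hmvpos : (0:ℝ) < (m:ℝ) + v := lt_of_lt_of_le (by positivity) hmv
  have key : ((m:ℝ) + u)/((m:ℝ) + v) - 1 - (u - v)/n
      = (u-v)*(1-v) / (n * ((m:ℝ)+v)) := by
    field_simp
    ring
  rw [key, abs_div, abs_mul]
  rw [abs_of_pos (by positivity : (0:ℝ) < n * ((m:ℝ)+v))]
  have hden : n^2/2 ≤ n * ((m:ℝ)+v) := by nlinarith
  calc |u - v| * |1 - v| / (n * ((m:ℝ)+v)) ≤ |u - v| * |1 - v| / (n^2/2) :=
        div_le_div_of_nonneg_left (by positivity) (by positivity) hden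
    _ = 2 * |u - v| * |1 - v| / n^2 := by rw [div_div_eq_mul_div]; ring

lemma SA.congr {c₀ : ℝ} {f g : ℕ → ℝ} (h : SA c₀ f) (M₀ : ℕ)
    (hfg : ∀ m, M₀ ≤ m → g m = f m) : SA c₀ g := by
  obtain ⟨c₁, C, M, hM⟩ := h
  exact ⟨c₁, C, max M M₀, fun m hm => by
    rw [hfg m (le_trans (le_max_right _ _) hm)]
    exact hM m (le_trans (le_max_left _ _) hm)⟩

lemma SA.sPlus {c₀ : ℝ} {c : ℕ → ℝ} (h : SA c₀ c) (h0 : 0 < c₀) : SPlus c := by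
  obtain ⟨c₁, C, M, hM⟩ := h
  have hC0 : 0 ≤ C := SA.Cnonneg hM
  refine ⟨c₀, c₁, h0,
    C + ∑ i ∈ Finset.range M, |(i:ℝ)^2 * (c i - c₀ - c₁/((i:ℝ)+1))|, fun m => ?_⟩
  have hsum : (0:ℝ) ≤ ∑ i ∈ Finset.range M, |(i:ℝ)^2 * (c i - c₀ - c₁/((i:ℝ)+1))| :=
    Finset.sum_nonneg fun i _ => abs_nonneg _
  by_cases hm : M ≤ m
  · have h1 := hM m hm
    have h2 : |(m:ℝ)^2 * (c m - c₀ - c₁/((m:ℝ)+1))| ≤ C := by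
      rw [abs_mul, abs_of_nonneg (by positivity : (0:ℝ) ≤ (m:ℝ)^2)]
      calc (m:ℝ)^2 * |c m - c₀ - c₁/((m:ℝ)+1)| ≤ (m:ℝ)^2 * (C/((m:ℝ)+1)^2) :=
            mul_le_mul_of_nonneg_left h1 (by positivity)
        _ ≤ C := by
            rw [mul_div_assoc', div_le_iff₀ (by positivity)]
            nlinarith [mul_nonneg hC0 (Nat.cast_nonneg m : (0:ℝ) ≤ (m:ℝ))]
    linarith
  · push_neg at hm
    have h1 := Finset.single_le_sum
      (f := fun i : ℕ => |(i:ℝ)^2 * (c i - c₀ - c₁/((i:ℝ)+1))|)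
      (fun i _ => abs_nonneg _) (Finset.mem_range.mpr hm)
    linarith



/-- Any real sequence satisfying `c_m = h(m−k,γ)/h(m,α)` for all `m ≥ max(α₁, k+γ₁)`
belongs to the class `𝒮₊`. -/
theorem hnorm_ratio_SPlus (a : ℝ) (ha : 0 < a) (r b : ℕ) (hr : 1 ≤ r)
    (α γ : ℕ → ℕ) (hα : Antitone α) (hγ : Antitone γ)
    (hαlen : ∀ j, r - 1 ≤ j → α j = 0) (hγlen : ∀ j, r - 1 ≤ j → γ j = 0)
    (k : ℕ) (hk : ∀ j, j < r - 1 → α j ≤ k + γ j)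
    (c : ℕ → ℝ)
    (hc : ∀ m : ℕ, max (α 0) (k + γ 0) ≤ m →
      c m = hnorm a r b (insertPart (m - k) γ) / hnorm a r b (insertPart m α)) :
    SPlus c := by
  obtain ⟨n, rfl⟩ : ∃ n, r = n + 1 := ⟨r - 1, by omega⟩
  obtain ⟨Kα, hKα, hαf⟩ := hnorm_insert a ha n b α
  obtain ⟨Kγ, hKγ, hγf⟩ := hnorm_insert a ha n b γ
  have hSA1 : SA 1 (fun m => ∏ i ∈ range k,
      (((m:ℝ) + (1 + a/2*(n:ℝ) + (b:ℝ) + (i:ℝ) - (k:ℝ))) /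
       ((m:ℝ) + (1 + a/2*(n:ℝ) + (i:ℝ) - (k:ℝ))))) := by
    have h := SA.finprod (range k) (fun _ => (1:ℝ))
      (fun i => fun m => (((m:ℝ) + (1 + a/2*(n:ℝ) + (b:ℝ) + (i:ℝ) - (k:ℝ))) /
       ((m:ℝ) + (1 + a/2*(n:ℝ) + (i:ℝ) - (k:ℝ)))))
      (fun i _ => SA.lin _ _)
    simpa using h
  have hSA2 : SA 1 (fun m => ∏ j ∈ range n, ∏ i ∈ range (k + γ j - α j),
      (((m:ℝ) + (1 + a/2*((j:ℝ)+1) + (i:ℝ) - ((k:ℝ) + (γ j:ℝ)))) /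
       ((m:ℝ) + (1 + a/2*(j:ℝ) + (i:ℝ) - ((k:ℝ) + (γ j:ℝ)))))) := by
    have h := SA.finprod (range n) (fun _ => (1:ℝ))
      (fun j => fun m => ∏ i ∈ range (k + γ j - α j),
        (((m:ℝ) + (1 + a/2*((j:ℝ)+1) + (i:ℝ) - ((k:ℝ) + (γ j:ℝ)))) /
         ((m:ℝ) + (1 + a/2*(j:ℝ) + (i:ℝ) - ((k:ℝ) + (γ j:ℝ))))))
      (fun j _ => by
        have h2 := SA.finprod (range (k + γ j - α j)) (fun _ => (1:ℝ))
          (fun i => fun m =>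
            (((m:ℝ) + (1 + a/2*((j:ℝ)+1) + (i:ℝ) - ((k:ℝ) + (γ j:ℝ)))) /
             ((m:ℝ) + (1 + a/2*(j:ℝ) + (i:ℝ) - ((k:ℝ) + (γ j:ℝ))))))
          (fun i _ => SA.lin _ _)
        simpa using h2)
    simpa using h
  have hSAF : SA (Kγ/Kα) (fun m =>
      (Kγ/Kα) * (∏ i ∈ range k,
        (((m:ℝ) + (1 + a/2*(n:ℝ) + (b:ℝ) + (i:ℝ) - (k:ℝ))) /
         ((m:ℝ) + (1 + a/2*(n:ℝ) + (i:ℝ) - (k:ℝ)))))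
      * ∏ j ∈ range n, ∏ i ∈ range (k + γ j - α j),
        (((m:ℝ) + (1 + a/2*((j:ℝ)+1) + (i:ℝ) - ((k:ℝ) + (γ j:ℝ)))) /
         ((m:ℝ) + (1 + a/2*(j:ℝ) + (i:ℝ) - ((k:ℝ) + (γ j:ℝ)))))) := by
    have h := ((SA.const (Kγ/Kα)).mul hSA1).mul hSA2
    simpa using h
  have heq : ∀ m, max (α 0) (k + γ 0) ≤ m → c m =
      (Kγ/Kα) * (∏ i ∈ range k,
        (((m:ℝ) + (1 + a/2*(n:ℝ) + (b:ℝ) + (i:ℝ) - (k:ℝ))) /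
         ((m:ℝ) + (1 + a/2*(n:ℝ) + (i:ℝ) - (k:ℝ)))))
      * ∏ j ∈ range n, ∏ i ∈ range (k + γ j - α j),
        (((m:ℝ) + (1 + a/2*((j:ℝ)+1) + (i:ℝ) - ((k:ℝ) + (γ j:ℝ)))) /
         ((m:ℝ) + (1 + a/2*(j:ℝ) + (i:ℝ) - ((k:ℝ) + (γ j:ℝ))))) := by
    intro m hm
    have hm1 : α 0 ≤ m := le_trans (le_max_left _ _) hm
    have hm2 : k + γ 0 ≤ m := le_trans (le_max_right _ _) hm
    have hkm : k ≤ m := by omega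
    have ha2 : (0:ℝ) ≤ a/2*(n:ℝ) := mul_nonneg (by linarith) (Nat.cast_nonneg n)
    have hb0 : (0:ℝ) ≤ (b:ℝ) := Nat.cast_nonneg b
    have hspos : (0:ℝ) < 1 + a/2*(n:ℝ) := by linarith
    have hsbpos : (0:ℝ) < 1 + a/2*(n:ℝ) + (b:ℝ) := by linarith
    rw [hc m hm, hαf m, hγf (m - k)]
    have e1 : (poch (1 + a/2*(n:ℝ)) (m-k) / poch (1 + a/2*(n:ℝ) + (b:ℝ)) (m-k)) /
        (poch (1 + a/2*(n:ℝ)) m / poch (1 + a/2*(n:ℝ) + (b:ℝ)) m)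
        = ∏ i ∈ range k,
          (((m:ℝ) + (1 + a/2*(n:ℝ) + (b:ℝ) + (i:ℝ) - (k:ℝ))) /
           ((m:ℝ) + (1 + a/2*(n:ℝ) + (i:ℝ) - (k:ℝ)))) := by
      rw [poch_ratio _ _ hspos hsbpos (m-k) m (Nat.sub_le m k),
        show m - (m-k) = k from by omega]
      refine Finset.prod_congr rfl fun i _ => ?_
      rw [Nat.cast_sub hkm]
      congr 1 <;> ring
    have e2 : ∀ j ∈ range n,
        (poch (1 + a/2*(j:ℝ)) ((m-k) - γ j) / poch (1 + a/2*((j:ℝ)+1)) ((m-k) - γ j)) /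
        (poch (1 + a/2*(j:ℝ)) (m - α j) / poch (1 + a/2*((j:ℝ)+1)) (m - α j))
        = ∏ i ∈ range (k + γ j - α j),
          (((m:ℝ) + (1 + a/2*((j:ℝ)+1) + (i:ℝ) - ((k:ℝ) + (γ j:ℝ)))) /
           ((m:ℝ) + (1 + a/2*(j:ℝ) + (i:ℝ) - ((k:ℝ) + (γ j:ℝ))))) := by
      intro j hj
      have hjn : j < n := mem_range.mp hj
      have hαγ : α j ≤ k + γ j := hk j (by omega)
      have hγ0 : γ j ≤ γ 0 := hγ (Nat.zero_le j)
      have haj : (0:ℝ) ≤ a/2*(j:ℝ) := mul_nonneg (by linarith) (Nat.cast_nonneg j)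
      have hx : (0:ℝ) < 1 + a/2*(j:ℝ) := by linarith
      have hy : (0:ℝ) < 1 + a/2*((j:ℝ)+1) := by nlinarith
      rw [poch_ratio _ _ hx hy ((m-k) - γ j) (m - α j) (by omega),
        show (m - α j) - ((m-k) - γ j) = k + γ j - α j from by omega,
        show (m-k) - γ j = m - (k + γ j) from by omega]
      refine Finset.prod_congr rfl fun i _ => ?_
      rw [Nat.cast_sub (show k + γ j ≤ m by omega)]
      push_cast
      congr 1 <;> ring
    have e2' : (∏ j ∈ range n,
          (poch (1 + a/2*(j:ℝ)) ((m-k) - γ j) / poch (1 + a/2*((j:ℝ)+1)) ((m-k) - γ j)))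
        / (∏ j ∈ range n,
          (poch (1 + a/2*(j:ℝ)) (m - α j) / poch (1 + a/2*((j:ℝ)+1)) (m - α j)))
        = ∏ j ∈ range n, ∏ i ∈ range (k + γ j - α j),
          (((m:ℝ) + (1 + a/2*((j:ℝ)+1) + (i:ℝ) - ((k:ℝ) + (γ j:ℝ)))) /
           ((m:ℝ) + (1 + a/2*(j:ℝ) + (i:ℝ) - ((k:ℝ) + (γ j:ℝ))))) := by
      rw [← Finset.prod_div_distrib]
      exact Finset.prod_congr rfl e2
    rw [show ∀ x y z u v w : ℝ, (x*y*z)/(u*v*w) = (x/u)*(y/v)*(z/w) from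
      fun x y z u v w => by ring]
    rw [e1, e2']
  exact ((hSAF.congr _ heq).sPlus (div_pos hKγ hKα))
end

section
/- Let n > 1 be a real number, c > 0, and let d : ℕ → ℕ be a sequence of positive integers with d_m/m^{n−1} → c as m → ∞. Define N(M) = Σ_{m=0}^{M} d_m (with N(−1) = 0), and let σ : {1,2,3,…} → ℝ be the nonincreasing sequence defined by σ_j = 1/(m+1) whenever N(m−1) < j ≤ N(m). Then there exists a constant C > 0 such that Σ_{i=1}^{j} σ_i ≤ C · j^{1−1/n} for all j ≥ 1. -/
open Finset Filter


/-- Key pointwise inequality: for `p > 0` and `x ≥ 0`,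
`(x+1)^(p-1) ≤ (1 + 1/p) * ((x+1)^p - x^p)`. -/
lemma step_ineq (p : ℝ) (hp : 0 < p) (x : ℝ) (hx : 0 ≤ x) :
    (x + 1) ^ (p - 1) ≤ (1 + 1 / p) * ((x + 1) ^ p - x ^ p) := by
  have hx1 : (0:ℝ) < x + 1 := by linarith
  have hsplit : (x + 1) ^ p = (x + 1) * (x + 1) ^ (p - 1) := by
    have h := Real.rpow_add hx1 1 (p - 1)
    rw [show (1:ℝ) + (p - 1) = p by ring, Real.rpow_one] at h
    exact h
  rcases le_or_gt 1 p with hp1 | hp1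
  · -- p ≥ 1 : x^p ≤ x * (x+1)^(p-1)
    have h1 : x ^ p ≤ x * (x + 1) ^ (p - 1) := by
      have hxp : x ^ p = x ^ (1:ℝ) * x ^ (p - 1) := by
        rw [← Real.rpow_add' hx (by norm_num; linarith)]
        norm_num
      rw [hxp, Real.rpow_one]
      exact mul_le_mul_of_nonneg_left
        (Real.rpow_le_rpow hx (by linarith) (by linarith)) hx
    have hdiff : (x + 1) ^ (p - 1) ≤ (x + 1) ^ p - x ^ p := by
      rw [hsplit]; nlinarith [Real.rpow_nonneg (le_of_lt hx1) (p-1)]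
    have hnn : (0:ℝ) ≤ (x + 1) ^ p - x ^ p :=
      le_trans (Real.rpow_nonneg (le_of_lt hx1) (p-1)) hdiff
    nlinarith [one_div_pos.mpr hp]
  · -- 0 < p < 1 : weighted AM-GM
    have hgm : x ^ p * (x + 1) ^ (1 - p) ≤ p * x + (1 - p) * (x + 1) :=
      Real.geom_mean_le_arith_mean2_weighted (le_of_lt hp) (by linarith) hx
        (le_of_lt hx1) (by ring)
    have hkey : x ^ p ≤ (p * x + (1 - p) * (x + 1)) * (x + 1) ^ (p - 1) := by
      have h2 : x ^ p = x ^ p * (x + 1) ^ (1 - p) * (x + 1) ^ (p - 1) := by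
        rw [mul_assoc, ← Real.rpow_add hx1]
        norm_num
      rw [h2]
      exact mul_le_mul_of_nonneg_right hgm (Real.rpow_nonneg (le_of_lt hx1) _)
    have hpos : (0:ℝ) ≤ (x + 1) ^ (p - 1) := Real.rpow_nonneg (le_of_lt hx1) _
    have hdiff : p * (x + 1) ^ (p - 1) ≤ (x + 1) ^ p - x ^ p := by
      rw [hsplit]; nlinarith
    have hnn : (0:ℝ) ≤ (x + 1) ^ p - x ^ p := le_trans (by positivity) hdiff
    have h1p : (0:ℝ) < 1 / p := one_div_pos.mpr hp
    calc (x + 1) ^ (p - 1) = (1/p) * (p * (x + 1) ^ (p - 1)) := by field_simp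
      _ ≤ (1/p) * ((x + 1) ^ p - x ^ p) := by
          exact mul_le_mul_of_nonneg_left hdiff (le_of_lt h1p)
      _ ≤ (1 + 1/p) * ((x + 1) ^ p - x ^ p) := by nlinarith

/-- Power sum bound: `∑_{k<m} (k+1)^(p-1) ≤ (1+1/p) m^p`. -/
lemma power_sum_bound (p : ℝ) (hp : 0 < p) (m : ℕ) :
    ∑ k ∈ range m, ((k : ℝ) + 1) ^ (p - 1) ≤ (1 + 1 / p) * (m : ℝ) ^ p := by
  induction m with
  | zero => simp [Real.zero_rpow (ne_of_gt hp)]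
  | succ m ih =>
      rw [Finset.sum_range_succ]
      have h := step_ineq p hp (m : ℝ) (Nat.cast_nonneg m)
      push_cast
      nlinarith

/-- Let `d_m` be positive integer multiplicities with `d_m/m^{n−1} → c > 0` for some `n > 1`,
and let `σ` be the nonincreasing sequence listing the value `1/(m+1)` with multiplicity `d_m`,
i.e. `σ_j = 1/(m+1)` whenever `N(m−1) < j ≤ N(m)` where `N(m) = d_0 + ⋯ + d_m`.
Then the partial sums `σ_1 + ⋯ + σ_j` are `O(j^{1−1/n})`. -/
theorem partial_sums_singular_values (n : ℝ) (hn : 1 < n) (c : ℝ) (hc : 0 < c)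
    (d : ℕ → ℕ) (hd : ∀ m, 0 < d m)
    (hlim : Tendsto (fun m : ℕ => (d m : ℝ) / (m : ℝ) ^ (n - 1)) atTop (nhds c))
    (σ : ℕ → ℝ)
    (hσ : ∀ m j : ℕ, (∑ i ∈ Finset.range m, d i) < j →
      j ≤ (∑ i ∈ Finset.range (m + 1), d i) → σ j = 1 / ((m : ℝ) + 1)) :
    ∃ C : ℝ, 0 < C ∧ ∀ j : ℕ, 1 ≤ j →
      (∑ i ∈ Finset.Icc 1 j, σ i) ≤ C * (j : ℝ) ^ (1 - 1 / n) := by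
  have hn0 : (0:ℝ) < n := by linarith
  have hp : (0:ℝ) < n - 1 := by linarith
  -- Step 1: a uniform bound d k ≤ A (k+1)^(n-1)
  obtain ⟨K, hK⟩ : ∃ K : ℕ, ∀ k ≥ K, (d k : ℝ) / (k : ℝ) ^ (n - 1) < c + 1 := by
    have := hlim.eventually (gt_mem_nhds (show c < c + 1 by linarith))
    exact this.exists_forall_of_atTop
  set A : ℝ := (c + 1) + ∑ k ∈ range (K + 1), (d k : ℝ) with hAdef
  have hsum_nonneg : (0:ℝ) ≤ ∑ k ∈ range (K + 1), (d k : ℝ) := by positivity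
  have hA1 : (1:ℝ) ≤ A := by simp only [hAdef]; linarith
  have hA0 : (0:ℝ) < A := by linarith
  have hAc : c + 1 ≤ A := by simp only [hAdef]; linarith
  have hA : ∀ k : ℕ, (d k : ℝ) ≤ A * ((k : ℝ) + 1) ^ (n - 1) := by
    intro k
    have hk1 : (1:ℝ) ≤ ((k:ℝ) + 1) ^ (n - 1) :=
      Real.one_le_rpow (by linarith [Nat.cast_nonneg (α := ℝ) k]) (le_of_lt hp)
    rcases le_or_gt k K with hkK | hkK
    · have : (d k : ℝ) ≤ ∑ i ∈ range (K + 1), (d i : ℝ) :=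
        Finset.single_le_sum (f := fun i => (d i : ℝ))
          (fun i _ => Nat.cast_nonneg _)
          (Finset.mem_range.mpr (Nat.lt_succ_of_le hkK))
      calc (d k : ℝ) ≤ A := by simp only [hAdef]; linarith
        _ = A * 1 := by ring
        _ ≤ A * ((k:ℝ) + 1) ^ (n - 1) := by
            exact mul_le_mul_of_nonneg_left hk1 (le_of_lt hA0)
    · have hk : 1 ≤ k := by omega
      have hkpos : (0:ℝ) < (k:ℝ) ^ (n - 1) := by
        apply Real.rpow_pos_of_pos
        exact_mod_cast Nat.pos_of_ne_zero (by omega)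
      have h1 := hK k (by omega)
      rw [div_lt_iff₀ hkpos] at h1
      have h2 : (k:ℝ) ^ (n - 1) ≤ ((k:ℝ) + 1) ^ (n - 1) :=
        Real.rpow_le_rpow (by positivity) (by linarith) (le_of_lt hp)
      have h3 : (0:ℝ) ≤ ((k:ℝ)+1)^(n-1) := by positivity
      nlinarith
  -- Notation: N m = partial sums
  set N : ℕ → ℕ := fun m => ∑ r ∈ range (m + 1), d r with hNdef
  have hNmono : Monotone N := by
    intro a b hab
    exact Finset.sum_le_sum_of_subset (Finset.range_subset_range.mpr (by omega))
  have hNge : ∀ m, m + 1 ≤ N m := by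
    intro m
    calc m + 1 = ∑ _r ∈ range (m + 1), 1 := by simp
      _ ≤ N m := Finset.sum_le_sum (fun i _ => hd i)
  -- structure of σ
  have hstruct : ∀ i : ℕ, 1 ≤ i → ∃ k : ℕ, σ i = 1 / ((k:ℝ) + 1) ∧
      (∀ m, N m < i → m < k) := by
    intro i hi
    have hex : ∃ m, i ≤ N m := ⟨i - 1, by have := hNge (i - 1); omega⟩
    set k := Nat.find hex with hkdef
    have hk2 : i ≤ N k := Nat.find_spec hex
    have hk1 : (∑ r ∈ range k, d r) < i := by
      rcases Nat.eq_zero_or_pos k with h0 | h0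
      · simp [h0]; omega
      · have hmin : ¬ i ≤ N (k - 1) := Nat.find_min hex (by omega)
        have hlt : N (k - 1) < i := Nat.lt_of_not_le hmin
        have hNk : N (k - 1) = ∑ r ∈ range k, d r := by
          have hk' : k - 1 + 1 = k := by omega
          simp only [hNdef, hk']
        rw [hNk] at hlt; exact hlt
    refine ⟨k, hσ k i hk1 hk2, ?_⟩
    intro m hm
    by_contra h
    push_neg at h
    exact absurd (le_trans hk2 (hNmono h)) (by omega)
  have hσnonneg : ∀ i : ℕ, 1 ≤ i → 0 ≤ σ i := by
    intro i hi
    obtain ⟨k, hk, -⟩ := hstruct i hi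
    rw [hk]; positivity
  have hσsmall : ∀ m i : ℕ, N m < i → σ i ≤ 1 / ((m:ℝ) + 2) := by
    intro m i hmi
    have hi : 1 ≤ i := by omega
    obtain ⟨k, hk, hbound⟩ := hstruct i hi
    have hmk : m < k := hbound m hmi
    rw [hk]
    apply one_div_le_one_div_of_le (by positivity)
    have : (m:ℝ) + 1 ≤ (k:ℝ) := by exact_mod_cast hmk
    linarith
  -- L1 : exact sum up to N m
  have hL1 : ∀ m : ℕ, ∑ i ∈ Finset.Ioc 0 (N m), σ i
      = ∑ k ∈ range (m + 1), (d k : ℝ) / ((k:ℝ) + 1) := by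
    intro m
    induction m with
    | zero =>
        have hcongr : ∀ i ∈ Finset.Ioc 0 (N 0), σ i = 1 / ((0:ℝ) + 1) := by
          intro i hi
          rw [Finset.mem_Ioc] at hi
          rw [hσ 0 i (by simpa using hi.1) (by simpa [hNdef] using hi.2)]
          norm_num
        rw [Finset.sum_congr rfl hcongr, Finset.sum_const, Nat.card_Ioc]
        simp [hNdef]
    | succ m ih =>
        have hsplit := Finset.sum_Ioc_consecutive σ (Nat.zero_le (N m))
          (hNmono (Nat.le_succ m))
        rw [show m.succ = m + 1 from rfl] at hsplit
        rw [← hsplit, ih]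
        have hcongr : ∀ i ∈ Finset.Ioc (N m) (N (m + 1)),
            σ i = 1 / ((m:ℝ) + 1 + 1) := by
          intro i hi
          rw [Finset.mem_Ioc] at hi
          have := hσ (m + 1) i (by simpa [hNdef] using hi.1)
            (by simpa [hNdef] using hi.2)
          rw [this]; push_cast; ring_nf
        rw [Finset.sum_congr rfl hcongr, Finset.sum_const, Nat.card_Ioc]
        have hNsucc : N (m + 1) = N m + d (m + 1) := by
          simp [hNdef, Finset.sum_range_succ]
        rw [hNsucc, Nat.add_sub_cancel_left, nsmul_eq_mul,
          Finset.sum_range_succ (fun k => (d k : ℝ) / ((k:ℝ) + 1)) (m + 1)]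
        push_cast
        ring
  -- L2 : the split bound
  have hL2 : ∀ m j : ℕ, ∑ i ∈ Finset.Ioc 0 j, σ i
      ≤ (∑ k ∈ range (m + 1), (d k : ℝ) / ((k:ℝ) + 1)) + (j:ℝ) * (1 / ((m:ℝ) + 2)) := by
    intro m j
    rcases le_or_gt j (N m) with hj | hj
    · have h1 : ∑ i ∈ Finset.Ioc 0 j, σ i ≤ ∑ i ∈ Finset.Ioc 0 (N m), σ i := by
        apply Finset.sum_le_sum_of_subset_of_nonneg
          (Finset.Ioc_subset_Ioc le_rfl hj)
        intro i hi _
        exact hσnonneg i (by rw [Finset.mem_Ioc] at hi; omega)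
      have h2 : (0:ℝ) ≤ (j:ℝ) * (1 / ((m:ℝ) + 2)) := by positivity
      rw [hL1 m] at h1
      linarith
    · have hsplit := Finset.sum_Ioc_consecutive σ (Nat.zero_le (N m)) (le_of_lt hj)
      rw [← hsplit, hL1 m]
      have htail : ∑ i ∈ Finset.Ioc (N m) j, σ i ≤ (j:ℝ) * (1 / ((m:ℝ) + 2)) := by
        calc ∑ i ∈ Finset.Ioc (N m) j, σ i
            ≤ ∑ _i ∈ Finset.Ioc (N m) j, 1 / ((m:ℝ) + 2) := by
              apply Finset.sum_le_sum
              intro i hi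
              exact hσsmall m i (by rw [Finset.mem_Ioc] at hi; exact hi.1)
          _ = ((j - N m : ℕ) : ℝ) * (1 / ((m:ℝ) + 2)) := by
              rw [Finset.sum_const, Nat.card_Ioc]; simp
          _ ≤ (j:ℝ) * (1 / ((m:ℝ) + 2)) := by
              apply mul_le_mul_of_nonneg_right _ (by positivity)
              exact_mod_cast Nat.sub_le j (N m)
      linarith
  -- T bound
  have hT : ∀ m : ℕ, (∑ k ∈ range (m + 1), (d k : ℝ) / ((k:ℝ) + 1))
      ≤ A * ((1 + 1 / (n - 1)) * ((m:ℝ) + 1) ^ (n - 1)) := by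
    intro m
    have h1 : ∀ k : ℕ, (d k : ℝ) / ((k:ℝ) + 1) ≤ A * ((k:ℝ) + 1) ^ (n - 1 - 1) := by
      intro k
      have hk1 : (0:ℝ) < (k:ℝ) + 1 := by positivity
      rw [div_le_iff₀ hk1]
      have hid : ((k:ℝ) + 1) ^ (n - 1 - 1) * ((k:ℝ) + 1) = ((k:ℝ) + 1) ^ (n - 1) := by
        have h := Real.rpow_add hk1 (n - 1 - 1) 1
        rw [Real.rpow_one, show n - 1 - 1 + 1 = n - 1 by ring] at h
        exact h.symm
      calc (d k : ℝ) ≤ A * ((k:ℝ) + 1) ^ (n - 1) := hA k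
        _ = A * (((k:ℝ) + 1) ^ (n - 1 - 1)) * ((k:ℝ) + 1) := by rw [← hid]; ring
    calc (∑ k ∈ range (m + 1), (d k : ℝ) / ((k:ℝ) + 1))
        ≤ ∑ k ∈ range (m + 1), A * ((k:ℝ) + 1) ^ (n - 1 - 1) :=
          Finset.sum_le_sum (fun k _ => h1 k)
      _ = A * ∑ k ∈ range (m + 1), ((k:ℝ) + 1) ^ (n - 1 - 1) := by
          rw [Finset.mul_sum]
      _ ≤ A * ((1 + 1 / (n - 1)) * ((m + 1 : ℕ) : ℝ) ^ (n - 1)) := by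
          exact mul_le_mul_of_nonneg_left
            (power_sum_bound (n - 1) hp (m + 1)) (le_of_lt hA0)
      _ = A * ((1 + 1 / (n - 1)) * ((m:ℝ) + 1) ^ (n - 1)) := by push_cast; ring
  -- final assembly
  have hKn : (0:ℝ) < 1 + 1 / (n - 1) := by positivity
  have h2n : (0:ℝ) < (2:ℝ) ^ (n - 1) := Real.rpow_pos_of_pos (by norm_num) _
  refine ⟨A * (1 + 1 / (n - 1)) * (2:ℝ) ^ (n - 1) + 1, by positivity, ?_⟩
  intro j hj
  have hj1 : (1:ℝ) ≤ (j:ℝ) := by exact_mod_cast hj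
  have hj0 : (0:ℝ) < (j:ℝ) := by linarith
  set m : ℕ := ⌊(j:ℝ) ^ (1/n)⌋₊ with hmdef
  have hr0 : (0:ℝ) ≤ (j:ℝ) ^ (1/n) := Real.rpow_nonneg (le_of_lt hj0) _
  have hr1 : (1:ℝ) ≤ (j:ℝ) ^ (1/n) := Real.one_le_rpow hj1 (by positivity)
  have hfl : (m:ℝ) ≤ (j:ℝ) ^ (1/n) := Nat.floor_le hr0
  have hfl2 : (j:ℝ) ^ (1/n) < (m:ℝ) + 1 := Nat.lt_floor_add_one _
  have hrpos : (0:ℝ) < (j:ℝ) ^ (1/n) := lt_of_lt_of_le one_pos hr1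
  have hpowid : (j:ℝ) ^ (1 - 1/n) * (j:ℝ) ^ (1/n) = (j:ℝ) := by
    rw [← Real.rpow_add hj0]
    norm_num
  have hpow0 : (0:ℝ) < (j:ℝ) ^ (1 - 1/n) := Real.rpow_pos_of_pos hj0 _
  -- bound 1 : j/(m+2) ≤ j^{1-1/n}
  have hb1 : (j:ℝ) * (1 / ((m:ℝ) + 2)) ≤ (j:ℝ) ^ (1 - 1/n) := by
    rw [mul_one_div, div_le_iff₀ (by positivity)]
    calc (j:ℝ) = (j:ℝ) ^ (1 - 1/n) * (j:ℝ) ^ (1/n) := hpowid.symm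
      _ ≤ (j:ℝ) ^ (1 - 1/n) * ((m:ℝ) + 2) := by
          apply mul_le_mul_of_nonneg_left _ (le_of_lt hpow0)
          linarith
  -- bound 2 : (m+1)^{n-1} ≤ 2^{n-1} j^{1-1/n}
  have hb2 : ((m:ℝ) + 1) ^ (n - 1) ≤ (2:ℝ) ^ (n - 1) * (j:ℝ) ^ (1 - 1/n) := by
    have hle : (m:ℝ) + 1 ≤ 2 * (j:ℝ) ^ (1/n) := by linarith
    calc ((m:ℝ) + 1) ^ (n - 1) ≤ (2 * (j:ℝ) ^ (1/n)) ^ (n - 1) :=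
          Real.rpow_le_rpow (by positivity) hle (le_of_lt hp)
      _ = (2:ℝ) ^ (n - 1) * ((j:ℝ) ^ (1/n)) ^ (n - 1) :=
          Real.mul_rpow (by norm_num) hr0
      _ = (2:ℝ) ^ (n - 1) * (j:ℝ) ^ (1 - 1/n) := by
          rw [← Real.rpow_mul (le_of_lt hj0),
            show 1/n * (n - 1) = 1 - 1/n by field_simp]
  -- put it together
  have hmain := hL2 m j
  have hIcc : Finset.Icc 1 j = Finset.Ioc 0 j := Finset.Icc_add_one_left_eq_Ioc 0 j
  rw [hIcc]
  have hTm := hT m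
  have hchain : ((m:ℝ) + 1) ^ (n - 1) ≤ (2:ℝ) ^ (n - 1) * (j:ℝ) ^ (1 - 1/n) := hb2
  have hAK : (0:ℝ) ≤ A * (1 + 1 / (n - 1)) := by positivity
  calc ∑ i ∈ Finset.Ioc 0 j, σ i
      ≤ (∑ k ∈ range (m + 1), (d k : ℝ) / ((k:ℝ) + 1)) + (j:ℝ) * (1 / ((m:ℝ) + 2)) :=
        hmain
    _ ≤ A * ((1 + 1 / (n - 1)) * ((m:ℝ) + 1) ^ (n - 1)) + (j:ℝ) ^ (1 - 1/n) := by
        linarith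
    _ ≤ A * ((1 + 1 / (n - 1)) * ((2:ℝ) ^ (n - 1) * (j:ℝ) ^ (1 - 1/n)))
          + (j:ℝ) ^ (1 - 1/n) := by
        have := mul_le_mul_of_nonneg_left hb2 hAK
        nlinarith
    _ = (A * (1 + 1 / (n - 1)) * (2:ℝ) ^ (n - 1) + 1) * (j:ℝ) ^ (1 - 1/n) := by ring
end

section
/- Let H be a complex Hilbert space which is the internal Hilbert direct sum of a family (Q_j)_{j∈ℕ} of pairwise orthogonal closed subspaces, with orthogonal projections P_j : H → H onto Q_j. Let T : H → H be a bounded linear operator with finite propagation, i.e. there exists l ∈ ℕ such that P_i T P_j = 0 whenever |i − j| > l. Suppose there is a constant C such that j²·‖T x‖ ≤ C·‖x‖ for every j ∈ ℕ and every x ∈ Q_j (i.e. TΛ² is bounded, where Λ is the diagonal operator with Λx = jx for x ∈ Q_j). Then: (i) there is a constant C′ such that Σ_{i∈ℕ} i⁴·‖P_i T x‖² ≤ C′²·‖x‖² for every x ∈ H (i.e. Λ²T is bounded), and (ii) there is a constant C″ such that j²·‖T* x‖ ≤ C″·‖x‖ for every j ∈ ℕ and every x ∈ Q_j (i.e. T*Λ²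 is bounded). -/
open scoped ComplexConjugate

set_option maxHeartbeats 1000000 in
/-- Let `H = ⊕_{j∈ℕ} Q_j` be an orthogonal decomposition of a complex Hilbert space,
given by mutually orthogonal self-adjoint idempotents `P j` summing to the identity.
Let `T` be a bounded operator of finite propagation (`P i T P j = 0` for `|i−j| > l`)
such that `TΛ²` is bounded, i.e. `j²‖Tx‖ ≤ C‖x‖` for `x ∈ Q_j`. Then `Λ²T` is bounded,
i.e. `∑_i i⁴‖P_i T x‖² ≤ C′²‖x‖²`, and `T*Λ²` is bounded, i.e. `j²‖T*x‖ ≤ C″‖x‖`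
for `x ∈ Q_j`. -/
theorem finite_propagation_bounded
    (H : Type*) [NormedAddCommGroup H] [InnerProductSpace ℂ H] [CompleteSpace H]
    (P : ℕ → H →L[ℂ] H)
    (hproj : ∀ j, IsIdempotentElem (P j))
    (hsa : ∀ j, ContinuousLinearMap.adjoint (P j) = P j)
    (horth : ∀ i j, i ≠ j → (P i).comp (P j) = 0)
    (hsum : ∀ x : H, HasSum (fun j => P j x) x)
    (T : H →L[ℂ] H) (l : ℕ)
    (hfp : ∀ i j : ℕ, (l : ℤ) < |(i : ℤ) - (j : ℤ)| → ((P i).comp T).comp (P j) = 0)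
    (C : ℝ)
    (hTΛ : ∀ j : ℕ, ∀ x : H, P j x = x → (j : ℝ) ^ 2 * ‖T x‖ ≤ C * ‖x‖) :
    (∃ C' : ℝ, ∀ x : H,
        (∑' i : ℕ, (i : ℝ) ^ 4 * ‖P i (T x)‖ ^ 2) ≤ C' ^ 2 * ‖x‖ ^ 2) ∧
    (∃ C'' : ℝ, ∀ j : ℕ, ∀ x : H, P j x = x →
        (j : ℝ) ^ 2 * ‖ContinuousLinearMap.adjoint T x‖ ≤ C'' * ‖x‖) := by
  classical
  set M : ℝ := max (max C 0) ‖T‖ with hMdef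
  have hM0 : (0:ℝ) ≤ M := le_trans (le_max_right C 0) (le_max_left _ _)
  set K : ℝ := ((l:ℝ)+1)^2 * M with hKdef
  have hK0 : (0:ℝ) ≤ K := by positivity
  -- idempotency pointwise
  have hpp : ∀ j (y : H), P j (P j y) = P j y := by
    intro j y
    have h := hproj j
    unfold IsIdempotentElem at h
    calc P j (P j y) = ((P j) * (P j)) y := rfl
      _ = P j y := by rw [h]
  -- inner ℂ product identity
  have hinner : ∀ j (y : H), (inner ℂ y (P j y) : ℂ) = ((‖P j y‖ : ℂ))^2 := by
    intro j y
    conv_lhs => rw [← hpp j y]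
    rw [← ContinuousLinearMap.adjoint_inner_left, hsa j, inner_self_eq_norm_sq_to_K]
    norm_cast
  -- projections are contractive
  have contract : ∀ j (y : H), ‖P j y‖ ≤ ‖y‖ := by
    intro j y
    have h2 : ‖P j y‖^2 ≤ ‖y‖ * ‖P j y‖ := by
      have h3 : ‖P j y‖^2 = Complex.re (inner ℂ y (P j y) : ℂ) := by
        rw [hinner j y]
        simp [← Complex.ofReal_pow]
      rw [h3]
      calc Complex.re (inner ℂ y (P j y) : ℂ) ≤ ‖(inner ℂ y (P j y) : ℂ)‖ :=
            Complex.re_le_norm _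
        _ ≤ ‖y‖ * ‖P j y‖ := norm_inner_le_norm _ _
    nlinarith [norm_nonneg (P j y), norm_nonneg y]
  -- key per-term bound
  have key : ∀ i j : ℕ, i ≤ j + l → ∀ y : H,
      (i:ℝ)^2 * ‖P i (T (P j y))‖ ≤ K * ‖P j y‖ := by
    intro i j hij y
    have hc : ‖P i (T (P j y))‖ ≤ ‖T (P j y)‖ := contract i _
    have hl0 : (0:ℝ) ≤ (l:ℝ) := Nat.cast_nonneg l
    have hi0 : (0:ℝ) ≤ (i:ℝ) := Nat.cast_nonneg i
    rcases Nat.eq_zero_or_pos j with hj | hj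
    · subst hj
      have h1 : ‖T (P 0 y)‖ ≤ M * ‖P 0 y‖ := by
        calc ‖T (P 0 y)‖ ≤ ‖T‖ * ‖P 0 y‖ := T.le_opNorm _
          _ ≤ M * ‖P 0 y‖ := mul_le_mul_of_nonneg_right (le_max_right _ _) (norm_nonneg _)
      have h2 : (i:ℝ) ≤ (l:ℝ) := by exact_mod_cast (by omega : i ≤ l)
      calc (i:ℝ)^2 * ‖P i (T (P 0 y))‖ ≤ (l:ℝ)^2 * (M * ‖P 0 y‖) := by
            apply mul_le_mul (by nlinarith [h2, hi0]) (hc.trans h1) (norm_nonneg _) (by positivity)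
        _ ≤ (((l:ℝ)+1)^2 * M) * ‖P 0 y‖ := by
            nlinarith [norm_nonneg (P 0 y), hM0, mul_nonneg hM0 (norm_nonneg (P 0 y)), hl0]
        _ = K * ‖P 0 y‖ := by rw [hKdef]
    · have hj1 : (1:ℝ) ≤ (j:ℝ) := by exact_mod_cast hj
      have hTb : (j:ℝ)^2 * ‖T (P j y)‖ ≤ C * ‖P j y‖ := hTΛ j (P j y) (hpp j y)
      have hCM : C * ‖P j y‖ ≤ M * ‖P j y‖ :=
        mul_le_mul_of_nonneg_right (le_trans (le_max_left C 0) (le_max_left _ _)) (norm_nonneg _)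
      have hi2 : (i:ℝ)^2 ≤ ((l:ℝ)+1)^2 * (j:ℝ)^2 := by
        have h1 : (i:ℝ) ≤ (j:ℝ) + (l:ℝ) := by exact_mod_cast hij
        have h2 : (j:ℝ) + (l:ℝ) ≤ ((l:ℝ)+1) * (j:ℝ) := by nlinarith
        nlinarith
      calc (i:ℝ)^2 * ‖P i (T (P j y))‖
          ≤ (((l:ℝ)+1)^2 * (j:ℝ)^2) * ‖T (P j y)‖ :=
            mul_le_mul hi2 hc (norm_nonneg _) (by positivity)
        _ = ((l:ℝ)+1)^2 * ((j:ℝ)^2 * ‖T (P j y)‖) := by ring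
        _ ≤ ((l:ℝ)+1)^2 * (M * ‖P j y‖) :=
            mul_le_mul_of_nonneg_left (hTb.trans hCM) (by positivity)
        _ = K * ‖P j y‖ := by rw [hKdef]; ring
  -- vanishing of far terms
  have vanish : ∀ i j : ℕ, ((l:ℤ) < |(i:ℤ) - (j:ℤ)|) → ∀ y : H, P i (T (P j y)) = 0 := by
    intro i j h y
    have h3 := DFunLike.congr_fun (hfp i j h) y
    simpa using h3
  -- row decomposition
  have hrow : ∀ (x : H) (i : ℕ),
      P i (T x) = ∑ j ∈ Finset.Icc (i-l) (i+l), P i (T (P j x)) := by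
    intro x i
    have h1 : HasSum (fun j => P i (T (P j x))) (P i (T x)) := by
      have := ((P i).comp T).hasSum (hsum x)
      simpa only [ContinuousLinearMap.comp_apply] using this
    refine h1.unique (hasSum_sum_of_ne_finset_zero ?_)
    intro j hj
    apply vanish
    simp only [Finset.mem_Icc, not_and_or, not_le] at hj
    rcases abs_cases ((i:ℤ) - (j:ℤ)) with ⟨h1, h2⟩ | ⟨h1, h2⟩ <;> rw [h1] <;> omega
  -- Parseval
  have parseval : ∀ x : H, HasSum (fun j => ‖P j x‖^2) (‖x‖^2) := by
    intro x
    have h1 : HasSum (fun j => (inner ℂ x (P j x) : ℂ)) (inner ℂ x x : ℂ) := by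
      exact (innerSL ℂ x).hasSum (hsum x)
    have h2 : (fun j => (inner ℂ x (P j x) : ℂ)) = fun j => (((‖P j x‖^2 : ℝ)) : ℂ) := by
      funext j
      rw [hinner j x]
      push_cast
      ring
    rw [h2, inner_self_eq_norm_sq_to_K] at h1
    have h3 := Complex.reCLM.hasSum h1
    simpa [← Complex.ofReal_pow] using h3
  -- adjoint pointwise bound transfer
  have adj_bound : ∀ (S : H →L[ℂ] H) (c : ℝ), 0 ≤ c →
      (∀ y : H, c * ‖S y‖ ≤ K * ‖y‖) →
      ∀ x : H, c * ‖ContinuousLinearMap.adjoint S x‖ ≤ K * ‖x‖ := by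
    intro S c hc hS x
    have h1 : ‖ContinuousLinearMap.adjoint S x‖^2
        ≤ ‖x‖ * ‖S (ContinuousLinearMap.adjoint S x)‖ := by
      have e : (inner ℂ (ContinuousLinearMap.adjoint S x) (ContinuousLinearMap.adjoint S x) : ℂ)
          = inner ℂ x (S (ContinuousLinearMap.adjoint S x)) :=
        ContinuousLinearMap.adjoint_inner_left S _ x
      calc ‖ContinuousLinearMap.adjoint S x‖^2
          = Complex.re (((‖ContinuousLinearMap.adjoint S x‖ : ℂ))^2) := by
            simp [← Complex.ofReal_pow]
        _ = Complex.re (inner ℂ (ContinuousLinearMap.adjoint S x)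
              (ContinuousLinearMap.adjoint S x) : ℂ) := by
            rw [inner_self_eq_norm_sq_to_K]
            norm_cast
        _ = Complex.re (inner ℂ x (S (ContinuousLinearMap.adjoint S x)) : ℂ) := by rw [e]
        _ ≤ ‖(inner ℂ x (S (ContinuousLinearMap.adjoint S x)) : ℂ)‖ :=
            Complex.re_le_norm _
        _ ≤ ‖x‖ * ‖S (ContinuousLinearMap.adjoint S x)‖ := norm_inner_le_norm _ _
    have h2 : c * ‖S (ContinuousLinearMap.adjoint S x)‖
        ≤ K * ‖ContinuousLinearMap.adjoint S x‖ := hS _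
    rcases eq_or_lt_of_le (norm_nonneg (ContinuousLinearMap.adjoint S x)) with hz0 | hz0
    · rw [← hz0, mul_zero]
      exact mul_nonneg hK0 (norm_nonneg x)
    · have h4 : c * ‖ContinuousLinearMap.adjoint S x‖^2
          ≤ c * (‖x‖ * ‖S (ContinuousLinearMap.adjoint S x)‖) := mul_le_mul_of_nonneg_left h1 hc
      have h5 : ‖x‖ * (c * ‖S (ContinuousLinearMap.adjoint S x)‖)
          ≤ ‖x‖ * (K * ‖ContinuousLinearMap.adjoint S x‖) :=
        mul_le_mul_of_nonneg_left h2 (norm_nonneg x)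
      have h6 : c * ‖ContinuousLinearMap.adjoint S x‖ * ‖ContinuousLinearMap.adjoint S x‖
          ≤ K * ‖x‖ * ‖ContinuousLinearMap.adjoint S x‖ := by nlinarith
      exact le_of_mul_le_mul_right h6 hz0
  -- cardinality bound
  have hcard : ∀ a : ℕ, ((Finset.Icc (a-l) (a+l)).card : ℝ) ≤ 2*(l:ℝ)+1 := by
    intro a
    have h : (Finset.Icc (a-l) (a+l)).card ≤ 2*l+1 := by
      rw [Nat.card_Icc]; omega
    calc ((Finset.Icc (a-l) (a+l)).card : ℝ) ≤ ((2*l+1 : ℕ) : ℝ) := by exact_mod_cast h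
      _ = 2*(l:ℝ)+1 := by push_cast; ring
  -- per-row squared bound
  have hI : ∀ (x : H) (i : ℕ), (i:ℝ)^4 * ‖P i (T x)‖^2
      ≤ (2*(l:ℝ)+1) * K^2 * ∑ j ∈ Finset.Icc (i-l) (i+l), ‖P j x‖^2 := by
    intro x i
    set s := Finset.Icc (i-l) (i+l) with hs
    have h1 : (i:ℝ)^2 * ‖P i (T x)‖ ≤ K * ∑ j ∈ s, ‖P j x‖ := by
      rw [hrow x i]
      calc (i:ℝ)^2 * ‖∑ j ∈ s, P i (T (P j x))‖
          ≤ (i:ℝ)^2 * ∑ j ∈ s, ‖P i (T (P j x))‖ :=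
            mul_le_mul_of_nonneg_left (norm_sum_le _ _) (by positivity)
        _ = ∑ j ∈ s, (i:ℝ)^2 * ‖P i (T (P j x))‖ := Finset.mul_sum _ _ _
        _ ≤ ∑ j ∈ s, K * ‖P j x‖ := by
            apply Finset.sum_le_sum
            intro j hj
            apply key i j ?_ x
            simp only [hs, Finset.mem_Icc] at hj
            omega
        _ = K * ∑ j ∈ s, ‖P j x‖ := (Finset.mul_sum _ _ _).symm
    have h2 : ((i:ℝ)^2 * ‖P i (T x)‖)^2 ≤ (K * ∑ j ∈ s, ‖P j x‖)^2 :=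
      pow_le_pow_left₀ (by positivity) h1 2
    have h3 : (∑ j ∈ s, ‖P j x‖)^2 ≤ (s.card : ℝ) * ∑ j ∈ s, ‖P j x‖^2 := by
      have := Finset.sum_mul_sq_le_sq_mul_sq s (fun _ => (1:ℝ)) (fun j => ‖P j x‖)
      simpa using this
    have h4 : (s.card:ℝ) ≤ 2*(l:ℝ)+1 := hcard i
    have h5 : (0:ℝ) ≤ ∑ j ∈ s, ‖P j x‖^2 := Finset.sum_nonneg (fun _ _ => sq_nonneg _)
    calc (i:ℝ)^4 * ‖P i (T x)‖^2 = ((i:ℝ)^2 * ‖P i (T x)‖)^2 := by ring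
      _ ≤ (K * ∑ j ∈ s, ‖P j x‖)^2 := h2
      _ = K^2 * (∑ j ∈ s, ‖P j x‖)^2 := by ring
      _ ≤ K^2 * ((s.card:ℝ) * ∑ j ∈ s, ‖P j x‖^2) :=
          mul_le_mul_of_nonneg_left h3 (by positivity)
      _ ≤ (2*(l:ℝ)+1) * K^2 * ∑ j ∈ s, ‖P j x‖^2 := by
          nlinarith [mul_nonneg (sq_nonneg K) h5]
  -- double sum bound
  have hdouble : ∀ (x : H) (F : Finset ℕ),
      ∑ i ∈ F, ∑ j ∈ Finset.Icc (i-l) (i+l), ‖P j x‖^2 ≤ (2*(l:ℝ)+1) * ‖x‖^2 := by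
    intro x F
    set G := F.biUnion (fun i => Finset.Icc (i-l) (i+l)) with hG
    have hcond : ∀ (a b : ℕ), a ∈ F ∧ b ∈ Finset.Icc (a-l) (a+l) ↔
        a ∈ F.filter (fun i => b ∈ Finset.Icc (i-l) (i+l)) ∧ b ∈ G := by
      intro a b
      simp only [Finset.mem_filter, hG, Finset.mem_biUnion]
      constructor
      · rintro ⟨ha, hb⟩; exact ⟨⟨ha, hb⟩, ⟨a, ha, hb⟩⟩
      · rintro ⟨⟨ha, hb⟩, _⟩; exact ⟨ha, hb⟩
    rw [Finset.sum_comm' hcond]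
    have hfilter : ∀ b : ℕ,
        ((F.filter (fun i => b ∈ Finset.Icc (i-l) (i+l))).card : ℝ) ≤ 2*(l:ℝ)+1 := by
      intro b
      have hsub : F.filter (fun i => b ∈ Finset.Icc (i-l) (i+l)) ⊆ Finset.Icc (b-l) (b+l) := by
        intro i hi
        simp only [Finset.mem_filter, Finset.mem_Icc] at hi ⊢
        omega
      have hcl := Finset.card_le_card hsub
      calc ((F.filter (fun i => b ∈ Finset.Icc (i-l) (i+l))).card : ℝ)
          ≤ ((Finset.Icc (b-l) (b+l)).card : ℝ) := by exact_mod_cast hcl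
        _ ≤ 2*(l:ℝ)+1 := hcard b
    calc ∑ b ∈ G, ∑ _a ∈ F.filter (fun i => b ∈ Finset.Icc (i-l) (i+l)), ‖P b x‖^2
        = ∑ b ∈ G, ((F.filter (fun i => b ∈ Finset.Icc (i-l) (i+l))).card : ℝ) * ‖P b x‖^2 := by
          apply Finset.sum_congr rfl
          intro b _
          rw [Finset.sum_const, nsmul_eq_mul]
      _ ≤ ∑ b ∈ G, (2*(l:ℝ)+1) * ‖P b x‖^2 :=
          Finset.sum_le_sum (fun b _ => mul_le_mul_of_nonneg_right (hfilter b) (sq_nonneg _))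
      _ = (2*(l:ℝ)+1) * ∑ b ∈ G, ‖P b x‖^2 := (Finset.mul_sum _ _ _).symm
      _ ≤ (2*(l:ℝ)+1) * ‖x‖^2 := by
          apply mul_le_mul_of_nonneg_left ?_ (by positivity)
          calc ∑ b ∈ G, ‖P b x‖^2 ≤ ∑' b, ‖P b x‖^2 :=
                Summable.sum_le_tsum G (fun _ _ => sq_nonneg _) (parseval x).summable
            _ = ‖x‖^2 := (parseval x).tsum_eq
  constructor
  · -- part (i)
    refine ⟨(2*(l:ℝ)+1) * K, ?_⟩
    intro x
    apply tsum_le_of_sum_le' (by positivity)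
    intro F
    calc ∑ i ∈ F, (i:ℝ)^4 * ‖P i (T x)‖^2
        ≤ ∑ i ∈ F, (2*(l:ℝ)+1) * K^2 * ∑ j ∈ Finset.Icc (i-l) (i+l), ‖P j x‖^2 :=
          Finset.sum_le_sum (fun i _ => hI x i)
      _ = (2*(l:ℝ)+1) * K^2 * ∑ i ∈ F, ∑ j ∈ Finset.Icc (i-l) (i+l), ‖P j x‖^2 :=
          (Finset.mul_sum _ _ _).symm
      _ ≤ (2*(l:ℝ)+1) * K^2 * ((2*(l:ℝ)+1) * ‖x‖^2) :=
          mul_le_mul_of_nonneg_left (hdouble x F) (by positivity)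
      _ = ((2*(l:ℝ)+1) * K)^2 * ‖x‖^2 := by ring
  · -- part (ii)
    refine ⟨(2*(l:ℝ)+1) * K, ?_⟩
    intro j x hx
    have hadj_eq : ∀ i : ℕ,
        ContinuousLinearMap.adjoint (((P j).comp T).comp (P i)) x
          = P i (ContinuousLinearMap.adjoint T x) := by
      intro i
      rw [ContinuousLinearMap.adjoint_comp, ContinuousLinearMap.adjoint_comp, hsa i, hsa j]
      simp only [ContinuousLinearMap.comp_apply]
      rw [hx]
    have hterm : ∀ i : ℕ, j ≤ i + l →
        (j:ℝ)^2 * ‖P i (ContinuousLinearMap.adjoint T x)‖ ≤ K * ‖x‖ := by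
      intro i hij
      have hS : ∀ y : H, (j:ℝ)^2 * ‖(((P j).comp T).comp (P i)) y‖ ≤ K * ‖y‖ := by
        intro y
        simp only [ContinuousLinearMap.comp_apply]
        calc (j:ℝ)^2 * ‖P j (T (P i y))‖ ≤ K * ‖P i y‖ := key j i hij y
          _ ≤ K * ‖y‖ := mul_le_mul_of_nonneg_left (contract i y) hK0
      have h2 := adj_bound _ _ (by positivity) hS x
      rwa [hadj_eq i] at h2
    have hAsum : ContinuousLinearMap.adjoint T x
        = ∑ i ∈ Finset.Icc (j-l) (j+l), P i (ContinuousLinearMap.adjoint T x) := by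
      refine (hsum _).unique (hasSum_sum_of_ne_finset_zero ?_)
      intro i hi
      rw [← hadj_eq i]
      have h0 : ((P j).comp T).comp (P i) = 0 := by
        apply hfp
        simp only [Finset.mem_Icc, not_and_or, not_le] at hi
        rcases abs_cases ((j:ℤ) - (i:ℤ)) with ⟨h1, h2⟩ | ⟨h1, h2⟩ <;> rw [h1] <;> omega
      rw [h0]
      simp
    rw [hAsum]
    set s := Finset.Icc (j-l) (j+l) with hs
    calc (j:ℝ)^2 * ‖∑ i ∈ s, P i (ContinuousLinearMap.adjoint T x)‖
        ≤ (j:ℝ)^2 * ∑ i ∈ s, ‖P i (ContinuousLinearMap.adjoint T x)‖ :=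
          mul_le_mul_of_nonneg_left (norm_sum_le _ _) (by positivity)
      _ = ∑ i ∈ s, (j:ℝ)^2 * ‖P i (ContinuousLinearMap.adjoint T x)‖ := Finset.mul_sum _ _ _
      _ ≤ ∑ i ∈ s, K * ‖x‖ := by
          apply Finset.sum_le_sum
          intro i hi
          apply hterm i
          simp only [hs, Finset.mem_Icc] at hi
          omega
      _ = (s.card : ℝ) * (K * ‖x‖) := by rw [Finset.sum_const, nsmul_eq_mul]
      _ ≤ (2*(l:ℝ)+1) * K * ‖x‖ := by
          have h4 := hcard j
          nlinarith [mul_nonneg hK0 (norm_nonneg x)]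
end

section
/- Let R be a (not necessarily commutative) ring and let I, J be two-sided ideals of R such that x·y ∈ J for all x, y ∈ I. Let A₁, A₂, A₃, A₄ and Ã₁, Ã₂, Ã₃, Ã₄ be elements of R such that for all 1 ≤ i, j ≤ 4: A_i − Ã_i ∈ I, [A_i, A_j] ∈ I, [Ã_i, Ã_j] ∈ I, and [A_i, A_j] − [Ã_i, Ã_j] ∈ J, where [x,y] = xy − yx. Then [A₁A₂, A₃A₄] − [Ã₁Ã₂, Ã₃Ã₄] ∈ J. -/
/-- Let `I, J` be two-sided ideals of a ring `R` with `I·I ⊆ J`. If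
`A_i − Ã_i ∈ I`, `[A_i, A_j] ∈ I`, `[Ã_i, Ã_j] ∈ I` and `[A_i, A_j] − [Ã_i, Ã_j] ∈ J`
for all `i, j`, then `[A₁A₂, A₃A₄] − [Ã₁Ã₂, Ã₃Ã₄] ∈ J`. -/
theorem commutator_product_mem
    (R : Type*) [Ring R] (I J : TwoSidedIdeal R)
    (hIJ : ∀ x ∈ I, ∀ y ∈ I, x * y ∈ J)
    (A tA : Fin 4 → R)
    (hdiff : ∀ i, A i - tA i ∈ I)
    (hcommA : ∀ i j, A i * A j - A j * A i ∈ I)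
    (hcommtA : ∀ i j, tA i * tA j - tA j * tA i ∈ I)
    (hcommJ : ∀ i j, (A i * A j - A j * A i) - (tA i * tA j - tA j * tA i) ∈ J) :
    ((A 0 * A 1) * (A 2 * A 3) - (A 2 * A 3) * (A 0 * A 1)) -
      ((tA 0 * tA 1) * (tA 2 * tA 3) - (tA 2 * tA 3) * (tA 0 * tA 1)) ∈ J := by
  -- key lemma: difference of triple products
  have key : ∀ a a' b b' c c' : R, a - a' ∈ I → b ∈ I → b' ∈ I → b - b' ∈ J →
      c - c' ∈ I → a * b * c - a' * b' * c' ∈ J := by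
    intro a a' b b' c c' ha hb hb' hbJ hc
    have h : a * b * c - a' * b' * c'
        = (a - a') * b * c + a' * (b - b') * c + a' * b' * (c - c') := by
      noncomm_ring
    rw [h]
    refine J.add_mem (J.add_mem ?_ ?_) ?_
    · exact J.mul_mem_right _ _ (hIJ _ ha _ hb)
    · exact J.mul_mem_right _ _ (J.mul_mem_left _ _ hbJ)
    · rw [mul_assoc]; exact J.mul_mem_left _ _ (hIJ _ hb' _ hc)
  -- product differences lie in I
  have pdiff : ∀ i j, A i * A j - tA i * tA j ∈ I := by
    intro i j
    have h : A i * A j - tA i * tA j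
        = (A i - tA i) * A j + tA i * (A j - tA j) := by noncomm_ring
    rw [h]
    exact I.add_mem (I.mul_mem_right _ _ (hdiff i)) (I.mul_mem_left _ _ (hdiff j))
  have D1 := key (A 0) (tA 0) (A 1 * A 2 - A 2 * A 1) (tA 1 * tA 2 - tA 2 * tA 1)
    (A 3) (tA 3) (hdiff 0) (hcommA 1 2) (hcommtA 1 2) (hcommJ 1 2) (hdiff 3)
  have D2 := key (A 0 * A 2) (tA 0 * tA 2) (A 1 * A 3 - A 3 * A 1)
    (tA 1 * tA 3 - tA 3 * tA 1) 1 1 (pdiff 0 2) (hcommA 1 3) (hcommtA 1 3) (hcommJ 1 3)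
    (by simp)
  have D3 := key 1 1 (A 0 * A 2 - A 2 * A 0) (tA 0 * tA 2 - tA 2 * tA 0)
    (A 3 * A 1) (tA 3 * tA 1) (by simp) (hcommA 0 2) (hcommtA 0 2)
    (hcommJ 0 2) (pdiff 3 1)
  have D4 := key (A 2) (tA 2) (A 0 * A 3 - A 3 * A 0) (tA 0 * tA 3 - tA 3 * tA 0)
    (A 1) (tA 1) (hdiff 2) (hcommA 0 3) (hcommtA 0 3) (hcommJ 0 3) (hdiff 1)
  have h : ((A 0 * A 1) * (A 2 * A 3) - (A 2 * A 3) * (A 0 * A 1)) -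
      ((tA 0 * tA 1) * (tA 2 * tA 3) - (tA 2 * tA 3) * (tA 0 * tA 1))
      = (A 0 * (A 1 * A 2 - A 2 * A 1) * A 3 - tA 0 * (tA 1 * tA 2 - tA 2 * tA 1) * tA 3)
      + ((A 0 * A 2) * (A 1 * A 3 - A 3 * A 1) * 1 - (tA 0 * tA 2) * (tA 1 * tA 3 - tA 3 * tA 1) * 1)
      + (1 * (A 0 * A 2 - A 2 * A 0) * (A 3 * A 1) - 1 * (tA 0 * tA 2 - tA 2 * tA 0) * (tA 3 * tA 1))
      + (A 2 * (A 0 * A 3 - A 3 * A 0) * A 1 - tA 2 * (tA 0 * tA 3 - tA 3 * tA 0) * tA 1) := by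
    noncomm_ring
  rw [h]
  exact J.add_mem (J.add_mem (J.add_mem D1 D2) D3) D4
end
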